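/- Let A' → A be a formally étale morphism of δ-rings and B a classically p-adically complete ring. If φ : A → B is a ring homomorphism such that the composite A' → A → B is a morphism of δ-rings, then φ itself is a morphism of δ-rings. -/

import Mathlib

/-- A `δ`-ring structure (for the prime `p`): an operation `δ` with `δ(1) = 0`,
`δ(x+y) = δ(x) + δ(y) − Σ_{0<i<p} (1/p)·binom(p,i)·x^i·y^(p−i)` and
`δ(xy) = x^p δ(y) + y^p δ(x) + p δ(x) δ(y)`. -/
structure DeltaStructure (R : Type*) [CommRing R] (p : ℕ) where
  δ : R → R
  delta_one : δ 1 = 0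
  delta_add : ∀ x y : R, δ (x + y) =
    δ x + δ y - ∑ i ∈ Finset.Ioo 0 p, ((p.choose i / p : ℕ) : R) * x ^ i * y ^ (p - i)
  delta_mul : ∀ x y : R, δ (x * y) =
    x ^ p * δ y + y ^ p * δ x + (p : R) * δ x * δ y

section Aux

variable {R : Type*} [CommRing R] {p : ℕ}

theorem DeltaStructure.delta_zero (D : DeltaStructure R p) : D.δ 0 = 0 := by
  have h := D.delta_add 0 0
  rw [add_zero] at h
  rw [Finset.sum_eq_zero (fun i hi => by
    rw [zero_pow (by simpa using (Finset.mem_Ioo.mp hi).1.ne')]; ring)] at h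
  rw [sub_zero] at h
  exact (right_eq_add.mp h)

theorem add_pow_prime_aux (hp : p.Prime) (x y : R) :
    (x + y) ^ p = x ^ p + y ^ p +
      ∑ i ∈ Finset.Ioo 0 p, (p.choose i : R) * x ^ i * y ^ (p - i) := by
  have hset : Finset.range (p + 1) = insert 0 (insert p (Finset.Ioo 0 p)) := by
    ext i
    simp only [Finset.mem_range, Finset.mem_insert, Finset.mem_Ioo]
    omega
  rw [add_pow, hset, Finset.sum_insert (by
      have := hp.pos
      simp only [Finset.mem_insert, Finset.mem_Ioo]
      omega),
    Finset.sum_insert (by simp [Finset.mem_Ioo])]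
  simp only [pow_zero, one_mul, Nat.choose_zero_right, Nat.cast_one, mul_one, Nat.sub_zero,
    Nat.choose_self, Nat.sub_self]
  rw [Finset.sum_congr rfl (fun i _ => by ring :
    ∀ i ∈ Finset.Ioo 0 p, x ^ i * y ^ (p - i) * (p.choose i : R)
      = (p.choose i : R) * x ^ i * y ^ (p - i))]
  ring

theorem mul_sum_choose_div (hp : p.Prime) (x y : R) :
    (p : R) * (∑ i ∈ Finset.Ioo 0 p, ((p.choose i / p : ℕ) : R) * x ^ i * y ^ (p - i)) =
      ∑ i ∈ Finset.Ioo 0 p, (p.choose i : R) * x ^ i * y ^ (p - i) := by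
  rw [Finset.mul_sum]
  refine Finset.sum_congr rfl (fun i hi => ?_)
  obtain ⟨h1, h2⟩ := Finset.mem_Ioo.mp hi
  have hdvd : p ∣ p.choose i := hp.dvd_choose_self h1.ne' h2
  have : (p : R) * ((p.choose i / p : ℕ) : R) = (p.choose i : R) := by
    rw [← Nat.cast_mul, Nat.mul_div_cancel' hdvd]
  rw [← mul_assoc, ← mul_assoc, this]

/-- The Frobenius lift associated to a `δ`-structure, as a ring homomorphism. -/
def DeltaStructure.frob (hp : p.Prime) (D : DeltaStructure R p) : R →+* R where
  toFun x := x ^ p + (p : R) * D.δ x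
  map_one' := by simp [D.delta_one]
  map_zero' := by simp [D.delta_zero, zero_pow hp.pos.ne']
  map_mul' x y := by
    show (x * y) ^ p + (p : R) * D.δ (x * y) =
      (x ^ p + (p : R) * D.δ x) * (y ^ p + (p : R) * D.δ y)
    rw [D.delta_mul]; ring
  map_add' x y := by
    show (x + y) ^ p + (p : R) * D.δ (x + y) =
      (x ^ p + (p : R) * D.δ x) + (y ^ p + (p : R) * D.δ y)
    rw [D.delta_add, mul_sub, mul_add, mul_sum_choose_div hp, add_pow_prime_aux hp]
    ring

@[simp] theorem DeltaStructure.frob_apply (hp : p.Prime) (D : DeltaStructure R p) (x : R) :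
    D.frob hp x = x ^ p + (p : R) * D.δ x := rfl

end Aux

universe u

/-- If `A' → A` is a formally étale morphism of `δ`-rings and `B` is a classically
`p`-adically complete ring with a `δ`-structure, then a ring homomorphism `φ : A → B`
is a morphism of `δ`-rings as soon as the composite `A' → A → B` is. -/
theorem stmt11 (p : ℕ) [Fact p.Prime]
    (A' A B : Type u) [CommRing A'] [CommRing A] [CommRing B]
    [Algebra A' A] [Algebra.FormallyEtale A' A]
    (DA' : DeltaStructure A' p) (DA : DeltaStructure A p) (DB : DeltaStructure B p)
    (hA'A : ∀ a : A', algebraMap A' A (DA'.δ a) = DA.δ (algebraMap A' A a))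
    (hB : IsAdicComplete (Ideal.span {(p : B)}) B)
    (φ : A →+* B)
    (hcomp : ∀ a : A', φ (algebraMap A' A (DA'.δ a)) = DB.δ (φ (algebraMap A' A a))) :
    ∀ a : A, φ (DA.δ a) = DB.δ (φ a) := by
  have hp : p.Prime := Fact.out
  classical
  set I : Ideal B := Ideal.span {(p : B)} with hI
  set d : A → B := fun x => φ (DA.δ x) - DB.δ (φ x) with hd
  have hpI : (p : B) ∈ I := Ideal.subset_span rfl
  have hd_add : ∀ x y : A, d (x + y) = d x + d y := by
    intro x y
    simp only [hd, map_add, DA.delta_add, DB.delta_add, map_sub, map_sum, map_mul, map_pow,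
      map_natCast]
    ring
  have hd_A' : ∀ r : A', d (algebraMap A' A r) = 0 := by
    intro r
    simp only [hd]
    rw [← hA'A, hcomp, sub_self]
  have hd_one : d 1 = 0 := by
    simp only [hd, DA.delta_one, DB.delta_one, map_one, map_zero, sub_zero]
  have key : ∀ x y : A, d (x * y) =
      (φ x ^ p + (p : B) * DB.δ (φ x)) * d y + (φ y ^ p + (p : B) * φ (DA.δ y)) * d x := by
    intro x y
    simp only [hd, map_mul, DA.delta_mul, DB.delta_mul, map_add, map_pow, map_natCast]
    ring
  have main : ∀ n : ℕ, ∀ x : A, d x ∈ I ^ n := by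
    intro n
    induction n with
    | zero => intro x; simp
    | succ n ih =>
      letI : Algebra A (B ⧸ I ^ (n + 1)) :=
        ((Ideal.Quotient.mk (I ^ (n + 1))).comp ((DB.frob hp).comp φ)).toAlgebra
      letI : Algebra A' (B ⧸ I ^ (n + 1)) :=
        (((Ideal.Quotient.mk (I ^ (n + 1))).comp ((DB.frob hp).comp φ)).comp
          (algebraMap A' A)).toAlgebra
      haveI : IsScalarTower A' A (B ⧸ I ^ (n + 1)) :=
        IsScalarTower.of_algebraMap_eq (fun r => rfl)
      have halg : ∀ z : A, algebraMap A (B ⧸ I ^ (n + 1)) z =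
          Ideal.Quotient.mk (I ^ (n + 1)) (DB.frob hp (φ z)) := fun z => rfl
      have hmem : ∀ x y : B, x ∈ I ^ n → (p : B) * x * y ∈ I ^ (n + 1) := by
        intro x y hx
        have h1 : (p : B) * x ∈ I * I ^ n := Ideal.mul_mem_mul hpI hx
        have h2 : I * I ^ n = I ^ (n + 1) := by rw [pow_succ, mul_comm]
        exact Ideal.mul_mem_right _ _ (h2 ▸ h1)
      let D : Derivation A' A (B ⧸ I ^ (n + 1)) :=
        { toFun := fun x => Ideal.Quotient.mk (I ^ (n + 1)) (d x)
          map_add' := fun x y => by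
            show Ideal.Quotient.mk (I ^ (n + 1)) (d (x + y)) =
              Ideal.Quotient.mk (I ^ (n + 1)) (d x) + Ideal.Quotient.mk (I ^ (n + 1)) (d y)
            rw [hd_add, map_add]
          map_smul' := fun r x => by
            show Ideal.Quotient.mk (I ^ (n + 1)) (d (r • x)) =
              r • Ideal.Quotient.mk (I ^ (n + 1)) (d x)
            rw [Algebra.smul_def, Algebra.smul_def,
              IsScalarTower.algebraMap_apply A' A (B ⧸ I ^ (n + 1)), halg, ← map_mul,
              key, hd_A' r, mul_zero, add_zero, DeltaStructure.frob_apply]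
          map_one_eq_zero' := by
            show Ideal.Quotient.mk (I ^ (n + 1)) (d 1) = 0
            rw [hd_one, map_zero]
          leibniz' := fun a b => by
            show Ideal.Quotient.mk (I ^ (n + 1)) (d (a * b)) =
              a • Ideal.Quotient.mk (I ^ (n + 1)) (d b) +
                b • Ideal.Quotient.mk (I ^ (n + 1)) (d a)
            rw [Algebra.smul_def, Algebra.smul_def, halg, halg, ← map_mul, ← map_mul, ← map_add,
              ← sub_eq_zero, ← map_sub, Ideal.Quotient.eq_zero_iff_mem]
            have heq : d (a * b) -
                (DB.frob hp (φ a) * d b + DB.frob hp (φ b) * d a) = (p : B) * d b * d a := by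
              simp only [DeltaStructure.frob_apply, key]
              simp only [hd]
              ring
            rw [heq]
            exact hmem _ _ (ih b) }
      intro x
      have hD : D x = 0 := by
        rw [← Derivation.liftKaehlerDifferential_comp_D D x,
          Subsingleton.elim (KaehlerDifferential.D A' A x) 0, map_zero]
      have h0 : Ideal.Quotient.mk (I ^ (n + 1)) (d x) = 0 := hD
      exact Ideal.Quotient.eq_zero_iff_mem.mp h0
  intro a
  have hda : d a = 0 := by
    refine hB.toIsHausdorff.haus (d a) (fun n => ?_)
    rw [SModEq.zero]
    have : (I ^ n • ⊤ : Submodule B B) = I ^ n := by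
      rw [Ideal.smul_eq_mul, Ideal.mul_top]
    rw [this]
    exact main n a
  have := hda
  simp only [hd] at this
  exact sub_eq_zero.mp this
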